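/- Let R₂ = ℤ[U,V]/(U² + V², UV) with u, v the images of U, V, and let φ be a ring automorphism of R₂ that maps the additive subgroup generated by u and v onto itself (i.e., φ preserves degree two). Then φ maps the set {u + v, −(u + v), u − v, v − u} onto itself. -/

import Mathlib

open MvPolynomial

/-- The ideal (U² + V², UV) in ℤ[U,V]. -/
noncomputable def I2 : Ideal (MvPolynomial (Fin 2) ℤ) :=
  Ideal.span {X 0 ^ 2 + X 1 ^ 2, X 0 * X 1}

/-- The ring R₂ = ℤ[U,V]/(U² + V², UV), the integral cohomology ring of CP² # −CP². -/
abbrev R2 : Type := MvPolynomial (Fin 2) ℤ ⧸ I2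

/-- The image u of U in R₂. -/
noncomputable def R2u : R2 := Ideal.Quotient.mk I2 (X 0)

/-- The image v of V in R₂. -/
noncomputable def R2v : R2 := Ideal.Quotient.mk I2 (X 1)

lemma coeff_e0_I2 (p : MvPolynomial (Fin 2) ℤ) (hp : p ∈ I2) :
    coeff (Finsupp.single 0 1) p = 0 := by
  rw [I2, Ideal.mem_span_pair] at hp
  obtain ⟨f, g, rfl⟩ := hp
  have h1 : (X (0:Fin 2) : MvPolynomial (Fin 2) ℤ) ^ 2 + X 1 ^ 2 = X 0 * X 0 + X 1 * X 1 := by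
    ring
  rw [h1]
  simp [mul_add, ← mul_assoc, coeff_add, coeff_mul_X', Finsupp.single_eq_single_iff]

lemma coeff_e1_I2 (p : MvPolynomial (Fin 2) ℤ) (hp : p ∈ I2) :
    coeff (Finsupp.single 1 1) p = 0 := by
  rw [I2, Ideal.mem_span_pair] at hp
  obtain ⟨f, g, rfl⟩ := hp
  have h1 : (X (0:Fin 2) : MvPolynomial (Fin 2) ℤ) ^ 2 + X 1 ^ 2 = X 0 * X 0 + X 1 * X 1 := by
    ring
  rw [h1]
  simp [mul_add, ← mul_assoc, coeff_add, coeff_mul_X', Finsupp.single_eq_single_iff]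

lemma coeff_sq_I2 (p : MvPolynomial (Fin 2) ℤ) (hp : p ∈ I2) :
    coeff (Finsupp.single 0 2) p = coeff (Finsupp.single 1 2) p := by
  rw [I2, Ideal.mem_span_pair] at hp
  obtain ⟨f, g, rfl⟩ := hp
  have h1 : (X (0:Fin 2) : MvPolynomial (Fin 2) ℤ) ^ 2 + X 1 ^ 2 = X 0 * X 0 + X 1 * X 1 := by
    ring
  rw [h1]
  have e00 : (Finsupp.single (0:Fin 2) 2) - Finsupp.single 0 1 = Finsupp.single 0 1 := by
    ext i; fin_cases i <;> simp
  have e11 : (Finsupp.single (1:Fin 2) 2) - Finsupp.single 1 1 = Finsupp.single 1 1 := by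
    ext i; fin_cases i <;> simp
  simp [mul_add, ← mul_assoc, coeff_add, coeff_mul_X', Finsupp.single_eq_single_iff, e00, e11]

lemma coeff_zero_intCast (m : ℤ) : coeff (0 : Fin 2 →₀ ℕ) ((m : MvPolynomial (Fin 2) ℤ)) = m := by
  have h := (map_intCast (C : ℤ →+* MvPolynomial (Fin 2) ℤ) m)
  rw [Int.cast_id] at h
  rw [← h, coeff_zero_C]

lemma R2_indep (m n : ℤ) (h : (m : R2) * R2u + (n : R2) * R2v = 0) : m = 0 ∧ n = 0 := by
  have hmem : ((m : MvPolynomial (Fin 2) ℤ) * X 0 + (n : MvPolynomial (Fin 2) ℤ) * X 1) ∈ I2 := by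
    rw [← Ideal.Quotient.eq_zero_iff_mem]
    rw [show ((m : R2) * R2u + (n : R2) * R2v : R2)
        = Ideal.Quotient.mk I2 ((m : MvPolynomial (Fin 2) ℤ) * X 0
            + (n : MvPolynomial (Fin 2) ℤ) * X 1) from by
      simp [R2u, R2v, map_add, map_mul]] at h
    exact h
  have h0 := coeff_e0_I2 _ hmem
  have h1 := coeff_e1_I2 _ hmem
  simp [coeff_add, coeff_mul_X', Finsupp.single_eq_single_iff, coeff_zero_intCast] at h0 h1
  exact ⟨h0, h1⟩

lemma R2_sq (k : ℤ) (h : (k : R2) * R2u ^ 2 = 0) : k = 0 := by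
  have hmem : ((k : MvPolynomial (Fin 2) ℤ) * X 0 ^ 2) ∈ I2 := by
    rw [← Ideal.Quotient.eq_zero_iff_mem]
    rw [show ((k : R2) * R2u ^ 2 : R2)
        = Ideal.Quotient.mk I2 ((k : MvPolynomial (Fin 2) ℤ) * X 0 ^ 2) from by
      simp [R2u, map_mul, map_pow]] at h
    exact h
  rw [X_pow_eq_monomial] at hmem
  have h0 := coeff_sq_I2 _ hmem
  simp [coeff_mul_monomial', coeff_monomial, Finsupp.single_eq_single_iff, coeff_zero_intCast] at h0
  exact h0

lemma R2_uv : R2u * R2v = 0 := by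
  rw [R2u, R2v, ← map_mul, Ideal.Quotient.eq_zero_iff_mem]
  exact Ideal.subset_span (by simp)

lemma R2_sqsum : R2u ^ 2 + R2v ^ 2 = 0 := by
  rw [R2u, R2v, ← map_pow, ← map_pow, ← map_add, Ideal.Quotient.eq_zero_iff_mem]
  exact Ideal.subset_span (by simp)

lemma int_key (a b c d e : ℤ) (h1 : a * c - b * d = 0)
    (h2 : a ^ 2 + c ^ 2 - (b ^ 2 + d ^ 2) = 0) (h3 : (a * d - b * c) * e = 1) :
    (a + c = b + d ∨ a + c = -(b + d)) ∧ (b + d = 1 ∨ b + d = -1) ∧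
    (a - c = b - d ∨ a - c = -(b - d)) ∧ (b - d = 1 ∨ b - d = -1) := by
  have hpq : a + c = b + d ∨ a + c = -(b + d) := by
    have h4 : ((a + c) - (b + d)) * ((a + c) + (b + d)) = 0 := by linear_combination h2 + 2 * h1
    rcases mul_eq_zero.mp h4 with h5 | h5
    · exact Or.inl (by linarith)
    · exact Or.inr (by linarith)
  have hrs : a - c = b - d ∨ a - c = -(b - d) := by
    have h4 : ((a - c) - (b - d)) * ((a - c) + (b - d)) = 0 := by linear_combination h2 - 2 * h1
    rcases mul_eq_zero.mp h4 with h5 | h5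
    · exact Or.inl (by linarith)
    · exact Or.inr (by linarith)
  have hD : a * d - b * c = 1 ∨ a * d - b * c = -1 :=
    Int.isUnit_iff.mp (IsUnit.of_mul_eq_one _ h3)
  have hDD : (b + d) * (a - c) - (a + c) * (b - d) = 2 * (a * d - b * c) := by ring
  have hqs : (b + d) * (b - d) = 1 ∨ (b + d) * (b - d) = -1 := by
    rcases hpq with hp | hp <;> rcases hrs with hr | hr <;> rcases hD with hd | hd <;>
      rw [hd] at hDD <;> rw [hp, hr] at hDD <;>
      first
        | (exfalso; nlinarith [hDD])
        | (left; nlinarith [hDD])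
        | (right; nlinarith [hDD])
  have hq : (b + d = 1 ∨ b + d = -1) ∧ (b - d = 1 ∨ b - d = -1) := by
    rcases hqs with hqs | hqs
    · constructor
      · exact Int.isUnit_iff.mp (IsUnit.of_mul_eq_one _ hqs)
      · exact Int.isUnit_iff.mp (IsUnit.of_mul_eq_one _ (by linarith [hqs] : (b - d) * (b + d) = 1))
    · constructor
      · exact Int.isUnit_iff.mp (IsUnit.of_mul_eq_one _ (show (b+d) * (-(b-d)) = 1 by linarith))
      · have := Int.isUnit_iff.mp (IsUnit.of_mul_eq_one _ (show (b-d) * (-(b+d)) = 1 by linarith))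
        omega
  exact ⟨hpq, hq.1, hrs, hq.2⟩

set_option maxHeartbeats 2000000 in
lemma R2_key (φ : R2 ≃+* R2)
    (h : ⇑φ '' (AddSubgroup.closure ({R2u, R2v} : Set R2) : Set R2)
        = (AddSubgroup.closure ({R2u, R2v} : Set R2) : Set R2)) :
    ⇑φ '' ({R2u + R2v, -(R2u + R2v), R2u - R2v, R2v - R2u} : Set R2)
      ⊆ ({R2u + R2v, -(R2u + R2v), R2u - R2v, R2v - R2u} : Set R2) := by
  have humem : R2u ∈ AddSubgroup.closure ({R2u, R2v} : Set R2) :=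
    AddSubgroup.subset_closure (Set.mem_insert _ _)
  have hvmem : R2v ∈ AddSubgroup.closure ({R2u, R2v} : Set R2) :=
    AddSubgroup.subset_closure (Set.mem_insert_of_mem _ rfl)
  have hu : φ R2u ∈ AddSubgroup.closure ({R2u, R2v} : Set R2) := by
    have : φ R2u ∈ ⇑φ '' (AddSubgroup.closure ({R2u, R2v} : Set R2) : Set R2) :=
      Set.mem_image_of_mem _ humem
    rw [h] at this; exact this
  have hv : φ R2v ∈ AddSubgroup.closure ({R2u, R2v} : Set R2) := by
    have : φ R2v ∈ ⇑φ '' (AddSubgroup.closure ({R2u, R2v} : Set R2) : Set R2) :=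
      Set.mem_image_of_mem _ hvmem
    rw [h] at this; exact this
  have hu' : φ.symm R2u ∈ AddSubgroup.closure ({R2u, R2v} : Set R2) := by
    have h2 : R2u ∈ ⇑φ '' (AddSubgroup.closure ({R2u, R2v} : Set R2) : Set R2) := by
      rw [h]; exact humem
    obtain ⟨x, hx, hxe⟩ := h2
    have : φ.symm R2u = x := by rw [← hxe]; simp
    rw [this]; exact hx
  have hv' : φ.symm R2v ∈ AddSubgroup.closure ({R2u, R2v} : Set R2) := by
    have h2 : R2v ∈ ⇑φ '' (AddSubgroup.closure ({R2u, R2v} : Set R2) : Set R2) := by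
      rw [h]; exact hvmem
    obtain ⟨x, hx, hxe⟩ := h2
    have : φ.symm R2v = x := by rw [← hxe]; simp
    rw [this]; exact hx
  obtain ⟨a, b, hab⟩ := AddSubgroup.mem_closure_pair.mp hu
  obtain ⟨c, d, hcd⟩ := AddSubgroup.mem_closure_pair.mp hv
  obtain ⟨a', b', hab'⟩ := AddSubgroup.mem_closure_pair.mp hu'
  obtain ⟨c', d', hcd'⟩ := AddSubgroup.mem_closure_pair.mp hv'
  simp only [zsmul_eq_mul] at hab hcd hab' hcd'
  -- multiplicative relations
  have hmul : ((a : R2) * R2u + (b : R2) * R2v) * ((c : R2) * R2u + (d : R2) * R2v) = 0 := by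
    rw [hab, hcd, ← map_mul, R2_uv, map_zero]
  have h1 : a * c - b * d = 0 := by
    refine R2_sq _ ?_
    push_cast
    linear_combination hmul - ((a : R2) * (d : R2) + (b : R2) * (c : R2)) * R2_uv
      - (b : R2) * (d : R2) * R2_sqsum
  have hsq2 : ((a : R2) * R2u + (b : R2) * R2v) ^ 2
      + ((c : R2) * R2u + (d : R2) * R2v) ^ 2 = 0 := by
    rw [hab, hcd, ← map_pow, ← map_pow, ← map_add, R2_sqsum, map_zero]
  have h2 : a ^ 2 + c ^ 2 - (b ^ 2 + d ^ 2) = 0 := by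
    refine R2_sq _ ?_
    push_cast
    linear_combination hsq2 - (2 * (a : R2) * (b : R2) + 2 * (c : R2) * (d : R2)) * R2_uv
      - ((b : R2) ^ 2 + (d : R2) ^ 2) * R2_sqsum
  -- inverse relations
  have hcomp1 : (a : R2) * ((a' : R2) * R2u + (b' : R2) * R2v)
      + (b : R2) * ((c' : R2) * R2u + (d' : R2) * R2v) = R2u := by
    have e1 : φ.symm (φ R2u) = R2u := φ.symm_apply_apply _
    rw [← hab] at e1
    have e2 : φ.symm ((a : R2) * R2u + (b : R2) * R2v)
        = (a : R2) * φ.symm R2u + (b : R2) * φ.symm R2v := by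
      rw [map_add, map_mul, map_mul, map_intCast, map_intCast]
    rw [hab', hcd', ← e2, e1]
  have hcomp2 : (c : R2) * ((a' : R2) * R2u + (b' : R2) * R2v)
      + (d : R2) * ((c' : R2) * R2u + (d' : R2) * R2v) = R2v := by
    have e1 : φ.symm (φ R2v) = R2v := φ.symm_apply_apply _
    rw [← hcd] at e1
    have e2 : φ.symm ((c : R2) * R2u + (d : R2) * R2v)
        = (c : R2) * φ.symm R2u + (d : R2) * φ.symm R2v := by
      rw [map_add, map_mul, map_mul, map_intCast, map_intCast]
    rw [hab', hcd', ← e2, e1]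
  have q12 : a * a' + b * c' - 1 = 0 ∧ a * b' + b * d' = 0 := by
    refine R2_indep _ _ ?_
    push_cast
    linear_combination hcomp1
  have q34 : c * a' + d * c' = 0 ∧ c * b' + d * d' - 1 = 0 := by
    refine R2_indep _ _ ?_
    push_cast
    linear_combination hcomp2
  have hdet : (a * d - b * c) * (a' * d' - b' * c') = 1 := by
    linear_combination (c * b' + d * d') * q12.1 + q34.2 - (c * a' + d * c') * q12.2
  obtain ⟨hpq, hq, hrs, hs⟩ := int_key a b c d (a' * d' - b' * c') h1 h2 hdet
  have hsum : φ (R2u + R2v) ∈ ({R2u + R2v, -(R2u + R2v), R2u - R2v, R2v - R2u} : Set R2) := by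
    have e : φ (R2u + R2v) = ((a + c : ℤ) : R2) * R2u + ((b + d : ℤ) : R2) * R2v := by
      rw [map_add, ← hab, ← hcd]; push_cast; ring
    rw [e]
    simp only [Set.mem_insert_iff, Set.mem_singleton_iff]
    rcases hpq with h'' | h'' <;> rcases hq with h' | h' <;> rw [h'', h'] <;>
      first
        | (left; push_cast; ring1)
        | (right; left; push_cast; ring1)
        | (right; right; left; push_cast; ring1)
        | (right; right; right; push_cast; ring1)
  have hdiff : φ (R2u - R2v) ∈ ({R2u + R2v, -(R2u + R2v), R2u - R2v, R2v - R2u} : Set R2) := by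
    have e : φ (R2u - R2v) = ((a - c : ℤ) : R2) * R2u + ((b - d : ℤ) : R2) * R2v := by
      rw [map_sub, ← hab, ← hcd]; push_cast; ring
    rw [e]
    simp only [Set.mem_insert_iff, Set.mem_singleton_iff]
    rcases hrs with h'' | h'' <;> rcases hs with h' | h' <;> rw [h'', h'] <;>
      first
        | (left; push_cast; ring1)
        | (right; left; push_cast; ring1)
        | (right; right; left; push_cast; ring1)
        | (right; right; right; push_cast; ring1)
  have hneg : ∀ x : R2, x ∈ ({R2u + R2v, -(R2u + R2v), R2u - R2v, R2v - R2u} : Set R2) →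
      -x ∈ ({R2u + R2v, -(R2u + R2v), R2u - R2v, R2v - R2u} : Set R2) := by
    intro x hx
    simp only [Set.mem_insert_iff, Set.mem_singleton_iff] at hx ⊢
    rcases hx with rfl | rfl | rfl | rfl
    · right; left; rfl
    · left; ring
    · right; right; right; ring
    · right; right; left; ring
  rintro y ⟨x, hx, rfl⟩
  simp only [Set.mem_insert_iff, Set.mem_singleton_iff] at hx
  rcases hx with rfl | rfl | rfl | rfl
  · exact hsum
  · rw [map_neg]; exact hneg _ hsum
  · exact hdiff
  · have e : φ (R2v - R2u) = -φ (R2u - R2v) := by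
      rw [← map_neg]; congr 1; ring
    rw [e]
    exact hneg _ hdiff

/-- Every ring automorphism of R₂ = ℤ[U,V]/(U² + V², UV) which maps the additive subgroup
generated by u and v onto itself (i.e., preserves degree two) maps the set
{u + v, −(u + v), u − v, v − u} onto itself. -/
theorem automorphism_R2_preserves (φ : R2 ≃+* R2)
    (h : ⇑φ '' (AddSubgroup.closure ({R2u, R2v} : Set R2) : Set R2)
        = (AddSubgroup.closure ({R2u, R2v} : Set R2) : Set R2)) :
    ⇑φ '' ({R2u + R2v, -(R2u + R2v), R2u - R2v, R2v - R2u} : Set R2)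
      = ({R2u + R2v, -(R2u + R2v), R2u - R2v, R2v - R2u} : Set R2) := by
  apply Set.Subset.antisymm
  · exact R2_key φ h
  · have h' : ⇑φ.symm '' (AddSubgroup.closure ({R2u, R2v} : Set R2) : Set R2)
        = (AddSubgroup.closure ({R2u, R2v} : Set R2) : Set R2) := by
      conv_lhs => rw [← h]
      rw [← Set.image_comp]
      have : ⇑φ.symm ∘ ⇑φ = id := funext φ.symm_apply_apply
      rw [this, Set.image_id]
    have hk := R2_key φ.symm h'
    intro x hx
    have hmem := hk (Set.mem_image_of_mem _ hx)
    exact ⟨φ.symm x, hmem, φ.apply_symm_apply x⟩
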